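/- Let 0 < α < 1, let F be α-SR, and let r > 0 be a monopoly price of F, i.e. φ(r) = 0. Then for every v ≥ r with F(v) < 1, one has v ≤ r + (r/(1−α)) · ( ((1−F(r))/(1−F(v)))^{1−α} − 1 ). (In quantile notation with q(v) = 1−F(v): for q ≤ q(r), the value at quantile q is at most r + (r/(1−α))((q(r)/q)^{1−α} − 1).) -/

import Mathlib

open MeasureTheory Real Filter

/-- The virtual valuation function `φ(v) = v − (1 − F(v))/f(v)`. -/
noncomputable def virtualValue (F f : ℝ → ℝ) (v : ℝ) : ℝ := v - (1 - F v) / f v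

/-- The hazard rate `h(v) = f(v)/(1 − F(v))`. -/
noncomputable def hazardRate (F f : ℝ → ℝ) (v : ℝ) : ℝ := f v / (1 - F v)

/-- `F` is the CDF of a continuous distribution supported on `[0, ∞)`,
with density `f = F'` that is positive wherever `F < 1`. -/
structure IsCDF (F f : ℝ → ℝ) : Prop where
  zero : F 0 = 0
  mono : Monotone F
  le_one : ∀ v, F v ≤ 1
  tendsto_one : Tendsto F atTop (nhds 1)
  hasDeriv : ∀ v, 0 ≤ v → HasDerivAt F (f v) v
  f_pos : ∀ v, 0 ≤ v → F v < 1 → 0 < f v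

/-- `F` is `α`-strongly regular: `φ(y) − φ(x) ≥ α (y − x)` for all `x < y` in the support. -/
def IsAlphaSR (α : ℝ) (F f : ℝ → ℝ) : Prop :=
  ∀ x y, 0 ≤ x → x < y → F y < 1 →
    virtualValue F f y - virtualValue F f x ≥ α * (y - x)

theorem value_upper_bound_quantile (α : ℝ) (F f : ℝ → ℝ)
    (hα0 : 0 < α) (hα1 : α < 1)
    (hcdf : IsCDF F f) (hSR : IsAlphaSR α F f)
    (r : ℝ) (hr : 0 < r) (hmon : virtualValue F f r = 0)
    (v : ℝ) (hrv : r ≤ v) (hv : F v < 1) :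
    v ≤ r + (r / (1 - α)) * (((1 - F r) / (1 - F v)) ^ (1 - α : ℝ) - 1) := by
  have hβ : (0:ℝ) < 1 - α := by linarith
  -- facts on [r, v]
  have hFx : ∀ x ∈ Set.Icc r v, F x < 1 := fun x hx =>
    lt_of_le_of_lt (hcdf.mono hx.2) hv
  have hx0 : ∀ x ∈ Set.Icc r v, (0:ℝ) ≤ x := fun x hx => le_trans hr.le hx.1
  have hfpos : ∀ x ∈ Set.Icc r v, 0 < f x := fun x hx =>
    hcdf.f_pos x (hx0 x hx) (hFx x hx)
  have h1F : ∀ x ∈ Set.Icc r v, 0 < 1 - F x := fun x hx => by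
    have := hFx x hx; linarith
  have hD : ∀ x ∈ Set.Icc r v, 0 < (1 - α) * x + α * r := fun x hx => by
    have hx1 : r ≤ x := hx.1
    nlinarith
  -- key pointwise bound : (1 - F x)/f x ≤ (1-α) x + α r
  have hbound : ∀ x ∈ Set.Icc r v, (1 - F x) / f x ≤ (1 - α) * x + α * r := by
    intro x hx
    rcases eq_or_lt_of_le hx.1 with h | h
    · subst h
      have heq : (1 - F r) / f r = r := by
        have := hmon; unfold virtualValue at this; linarith
      rw [heq]; nlinarith
    · have hs := hSR r x hr.le h (hFx x hx)
      rw [hmon] at hs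
      unfold virtualValue at hs
      nlinarith
  -- derivative comparison : f x/(1-F x) ≥ 1/((1-α)x + α r)
  have hderivge : ∀ x ∈ Set.Icc r v,
      1 / ((1 - α) * x + α * r) ≤ f x / (1 - F x) := by
    intro x hx
    rw [div_le_div_iff₀ (hD x hx) (h1F x hx)]
    have h1 := hbound x hx
    have h2 := hfpos x hx
    have := (div_le_iff₀ h2).mp h1
    nlinarith
  -- the comparison function
  set K : ℝ → ℝ := fun x => -Real.log (1 - F x) - Real.log ((1 - α) * x + α * r) / (1 - α)
    with hK
  have hKderiv : ∀ x ∈ Set.Icc r v,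
      HasDerivAt K (f x / (1 - F x) - 1 / ((1 - α) * x + α * r)) x := by
    intro x hx
    have h1 : HasDerivAt (fun x => 1 - F x) (-f x) x := by
      simpa using (hcdf.hasDeriv x (hx0 x hx)).const_sub 1
    have h2 : HasDerivAt (fun x => -Real.log (1 - F x)) (f x / (1 - F x)) x := by
      have := (h1.log (ne_of_gt (h1F x hx))).neg
      simpa [neg_div, Pi.neg_def] using this
    have h3 : HasDerivAt (fun x => (1 - α) * x + α * r) (1 - α) x := by
      simpa using ((hasDerivAt_id x).const_mul (1 - α)).add_const (α * r)
    have h4 : HasDerivAt (fun x => Real.log ((1 - α) * x + α * r) / (1 - α))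
        (1 / ((1 - α) * x + α * r)) x := by
      have := (h3.log (ne_of_gt (hD x hx))).div_const (1 - α)
      have heq : (1 - α) / ((1 - α) * x + α * r) / (1 - α)
          = 1 / ((1 - α) * x + α * r) := by
        rw [div_div, mul_comm, ← div_div, div_self hβ.ne']
      rwa [heq] at this
    exact h2.sub h4
  have hmono : MonotoneOn K (Set.Icc r v) := by
    apply monotoneOn_of_deriv_nonneg (convex_Icc r v)
    · exact fun x hx => ((hKderiv x hx).continuousAt).continuousWithinAt
    · intro x hx
      exact ((hKderiv x (interior_subset hx)).differentiableAt).differentiableWithinAt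
    · intro x hx
      have hx' := interior_subset hx
      rw [(hKderiv x hx').deriv]
      have := hderivge x hx'
      linarith
  have hKrv : K r ≤ K v :=
    hmono (Set.left_mem_Icc.mpr hrv) (Set.right_mem_Icc.mpr hrv) hrv
  have hrmem : r ∈ Set.Icc r v := Set.left_mem_Icc.mpr hrv
  have hvmem : v ∈ Set.Icc r v := Set.right_mem_Icc.mpr hrv
  have h1Fr := h1F r hrmem
  have h1Fv := h1F v hvmem
  have hDv := hD v hvmem
  -- unfold K r ≤ K v
  have hDr : (1 - α) * r + α * r = r := by ring
  rw [hK] at hKrv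
  simp only [hDr] at hKrv
  -- log inequality : log((Dv)/r) ≤ (1-α) * log((1-Fr)/(1-Fv))
  have hlog : Real.log (((1 - α) * v + α * r) / r)
      ≤ (1 - α) * Real.log ((1 - F r) / (1 - F v)) := by
    rw [Real.log_div (ne_of_gt hDv) (ne_of_gt hr),
        Real.log_div (ne_of_gt h1Fr) (ne_of_gt h1Fv)]
    have hm := mul_le_mul_of_nonneg_left hKrv hβ.le
    have e1 : (1 - α) * (Real.log r / (1 - α)) = Real.log r := by field_simp
    have e2 : (1 - α) * (Real.log ((1 - α) * v + α * r) / (1 - α))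
        = Real.log ((1 - α) * v + α * r) := by field_simp
    rw [mul_sub, mul_sub, e1, e2, mul_neg, mul_neg] at hm
    rw [mul_sub]
    linarith
  have hA : (0:ℝ) < (1 - F r) / (1 - F v) := div_pos h1Fr h1Fv
  have hlog2 : Real.log (((1 - α) * v + α * r) / r)
      ≤ Real.log (((1 - F r) / (1 - F v)) ^ (1 - α : ℝ)) := by
    rw [Real.log_rpow hA]; linarith
  have hmain : ((1 - α) * v + α * r) / r ≤ ((1 - F r) / (1 - F v)) ^ (1 - α : ℝ) := by
    have hpos : (0:ℝ) < ((1 - α) * v + α * r) / r := div_pos hDv hr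
    exact (Real.log_le_log_iff hpos (Real.rpow_pos_of_pos hA _)).mp hlog2
  -- conclude
  have hstep : v = r + (r / (1 - α)) * ((((1 - α) * v + α * r) / r) - 1) := by
    field_simp; ring
  have hc : (0:ℝ) < r / (1 - α) := div_pos hr hβ
  have := mul_le_mul_of_nonneg_left (sub_le_sub_right hmain 1) hc.le
  linarith
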